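/- For the 4-dimensional Lotka-Volterra system with antisymmetric matrix A having upper entries A_{12}=a₁, A_{13}=a₂, A_{23}=a₃, A_{14}=A_{24}=A_{34}=a₄, the function G = x₁^{-a₃} x₂^{a₂} x₃^{-a₁} (x₁+x₂+x₃)^{a₁-a₂+a₃} is a constant of motion of both the homogeneous system ẋ_i = x_i(Ax)_i and the inhomogeneous system ẋ_i = x_i(r + (Ax)_i) for any constant r. -/

import Mathlib

open Real Finset

/-- i-th component of the gradient of `F` at `x`. -/
noncomputable def grad {n : ℕ} (F : (Fin n → ℝ) → ℝ) (x : Fin n → ℝ) (i : Fin n) : ℝ :=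
  fderiv ℝ F x (Pi.single i 1)

/-- Lie derivative (directional derivative) of `F` along the vector field `f` at `x`. -/
noncomputable def lieDeriv {n : ℕ} (F : (Fin n → ℝ) → ℝ) (f : (Fin n → ℝ) → Fin n → ℝ)
    (x : Fin n → ℝ) : ℝ := ∑ i, grad F x i * f x i

/-- The Poisson bracket {F,G}(x) = Σ_{i,j} A_{ij} x_i x_j ∂_iF ∂_jG. -/
noncomputable def pbracket {n : ℕ} (A : Matrix (Fin n) (Fin n) ℝ)
    (F G : (Fin n → ℝ) → ℝ) (x : Fin n → ℝ) : ℝ :=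
  ∑ i, ∑ j, A i j * x i * x j * grad F x i * grad G x j

/-- The (possibly inhomogeneous) Lotka-Volterra vector field
`f_i(x) = x_i (r_i + Σ_j A_{ij} x_j)`. -/
def lvField {n : ℕ} (A : Matrix (Fin n) (Fin n) ℝ) (r : Fin n → ℝ)
    (x : Fin n → ℝ) (i : Fin n) : ℝ := x i * (r i + ∑ j, A i j * x j)

set_option maxHeartbeats 4000000 in
/-- for the 4-dim LV system of type [0,1,0],
G = x₁^{-a₃} x₂^{a₂} x₃^{-a₁} (x₁+x₂+x₃)^{a₁-a₂+a₃} is a constant of motion of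
both the homogeneous and the inhomogeneous (rate r) system. -/
theorem stmt6 (a₁ a₂ a₃ a₄ : ℝ) :
    let A : Matrix (Fin 4) (Fin 4) ℝ :=
      !![0, a₁, a₂, a₄; -a₁, 0, a₃, a₄; -a₂, -a₃, 0, a₄; -a₄, -a₄, -a₄, 0]
    let G : (Fin 4 → ℝ) → ℝ :=
      fun x => x 0 ^ (-a₃) * x 1 ^ a₂ * x 2 ^ (-a₁) * (x 0 + x 1 + x 2) ^ (a₁ - a₂ + a₃)
    ∀ x : Fin 4 → ℝ, (∀ i, 0 < x i) →
      lieDeriv G (lvField A 0) x = 0 ∧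
      ∀ r : ℝ, lieDeriv G (lvField A (fun _ => r)) x = 0 := by
  intro A G x hx
  have h0 := (hx 0).ne'
  have h1 := (hx 1).ne'
  have h2 := (hx 2).ne'
  have hs : x 0 + x 1 + x 2 ≠ 0 := by have := hx 0; have := hx 1; have := hx 2; positivity
  -- projections
  set pr : Fin 4 → ((Fin 4 → ℝ) →L[ℝ] ℝ) := fun i => ContinuousLinearMap.proj i with hpr
  have hp0 : HasFDerivAt (fun y : Fin 4 → ℝ => y 0 ^ (-a₃))
      ((-a₃ * x 0 ^ (-a₃ - 1)) • pr 0) x :=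
    by have hh := (Real.hasDerivAt_rpow_const (p := (-a₃)) (Or.inl h0)).comp_hasFDerivAt x (pr 0).hasFDerivAt; exact hh
  have hp1 : HasFDerivAt (fun y : Fin 4 → ℝ => y 1 ^ a₂)
      ((a₂ * x 1 ^ (a₂ - 1)) • pr 1) x :=
    by have hh := (Real.hasDerivAt_rpow_const (p := a₂) (Or.inl h1)).comp_hasFDerivAt x (pr 1).hasFDerivAt; exact hh
  have hp2 : HasFDerivAt (fun y : Fin 4 → ℝ => y 2 ^ (-a₁))
      ((-a₁ * x 2 ^ (-a₁ - 1)) • pr 2) x :=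
    by have hh := (Real.hasDerivAt_rpow_const (p := (-a₁)) (Or.inl h2)).comp_hasFDerivAt x (pr 2).hasFDerivAt; exact hh
  have hsum : HasFDerivAt (fun y : Fin 4 → ℝ => y 0 + y 1 + y 2) (pr 0 + pr 1 + pr 2) x :=
    ((pr 0).hasFDerivAt.add (pr 1).hasFDerivAt).add (pr 2).hasFDerivAt
  have hps : HasFDerivAt (fun y : Fin 4 → ℝ => (y 0 + y 1 + y 2) ^ (a₁ - a₂ + a₃))
      (((a₁ - a₂ + a₃) * (x 0 + x 1 + x 2) ^ (a₁ - a₂ + a₃ - 1)) • (pr 0 + pr 1 + pr 2)) x :=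
    by have hh := (Real.hasDerivAt_rpow_const (p := a₁ - a₂ + a₃) (Or.inl hs)).comp_hasFDerivAt x hsum; exact hh
  have hG : HasFDerivAt G _ x := ((hp0.mul hp1).mul hp2).mul hps
  have hgrad : ∀ i, grad G x i = _ := fun i => by
    rw [grad, hG.fderiv]
  have e0 := hgrad 0
  have e1 := hgrad 1
  have e2 := hgrad 2
  have e3 := hgrad 3
  simp only [ContinuousLinearMap.add_apply, ContinuousLinearMap.smul_apply,
    ContinuousLinearMap.coe_smul', Pi.smul_apply, hpr, ContinuousLinearMap.proj_apply,
    Pi.single_apply, if_pos, if_neg, Fin.isValue, smul_eq_mul] at e0 e1 e2 e3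
  norm_num at e0 e1 e2 e3
  simp only [Real.rpow_sub_one h0, Real.rpow_sub_one h1, Real.rpow_sub_one h2,
    Real.rpow_sub_one hs] at e0 e1 e2 e3
  have key : ∀ r : ℝ, lieDeriv G (lvField A (fun _ => r)) x = 0 := by
    intro r
    simp only [lieDeriv, lvField, Fin.sum_univ_four, e0, e1, e2, e3, A]
    norm_num [Matrix.cons_val', Matrix.cons_val_zero, Matrix.cons_val_one, Matrix.head_cons,
      Matrix.empty_val', Matrix.cons_val_fin_one, Matrix.head_fin_const,
      Matrix.cons_val_two, Matrix.tail_cons, Matrix.cons_val]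
    simp only [show ((2:Fin 4) = 0) = False from by simp, show ((2:Fin 4) = 1) = False from by simp,
      show ((0:Fin 4) = 2) = False from by simp, show ((1:Fin 4) = 2) = False from by simp,
      show ((0:Fin 4) = 3) = False from by simp, show ((1:Fin 4) = 3) = False from by simp,
      show ((2:Fin 4) = 3) = False from by simp, if_false, if_true]
    norm_num
    generalize (x 0 + x 1 + x 2) ^ (a₁ - a₂ + a₃) = u3
    generalize x 0 ^ (-a₃) = u0
    generalize x 1 ^ a₂ = u1
    generalize x 2 ^ (-a₁) = u2
    simp only [show ∀ (p q s t : ℝ), ![p, q, s, t] 3 = t from fun _ _ _ _ => rfl]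
    field_simp
    ring
  refine ⟨?_, key⟩
  have : (0 : Fin 4 → ℝ) = fun _ => (0:ℝ) := rfl
  rw [this]
  exact key 0
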